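/- For a covering family H ⊂ F(T) and a function g : X* → ℝ̄, a point x belongs to ∂g(a*) if and only if g(a*) + g*(x) = ⟨a*, x⟩; in particular, if {f; f_t, t ∈ T} ⊂ Γ(X), E ∩ dom f ≠ ∅ and x ∈ ∂φ_H(0_{X*}), then x ∈ E and f(x) = −φ_H(0_{X*}) = sup(D_H) = inf(P). -/

import Mathlib

open Pointwise Filter Topology

noncomputable section

section Defs

variable {T : Type*} {X : Type*} [AddCommGroup X] [Module ℝ X] [TopologicalSpace X]
  [IsTopologicalAddGroup X] [ContinuousSMul ℝ X] [LocallyConvexSpace ℝ X] [T2Space X]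

/-- The epigraph of an extended-real-valued function, as a subset of `Z × ℝ`. -/
def epiSet {Z : Type*} (f : Z → EReal) : Set (Z × ℝ) := {p | f p.1 ≤ (p.2 : EReal)}

/-- `f : Z → ℝ ∪ {+∞}` is a proper convex function (never `⊥`, not identically `⊤`,
with convex epigraph). -/
def IsProperConvex {Z : Type*} [AddCommGroup Z] [Module ℝ Z] (f : Z → EReal) : Prop :=
  (∀ x, f x ≠ ⊥) ∧ (∃ x, f x ≠ ⊤) ∧ Convex ℝ (epiSet f)

/-- Membership in `Γ(Z)`: proper convex and lower semicontinuous. -/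
def InGamma {Z : Type*} [AddCommGroup Z] [Module ℝ Z] [TopologicalSpace Z] (f : Z → EReal) : Prop :=
  IsProperConvex f ∧ LowerSemicontinuous f

/-- The Lagrangian `f + ∑_{t ∈ H} λ_t f_t` (with the convention `0·(+∞) = 0`,
which holds for `EReal` multiplication). -/
def lagFn (f : X → EReal) (ft : T → X → EReal) (H : Finset T) (lam : T → ℝ) : X → EReal :=
  fun x => f x + ∑ t ∈ H, (lam t : EReal) * ft t x

/-- The feasible set `E` of (P). -/
def feasSet (ft : T → X → EReal) : Set X := {x | ∀ t, ft t x ≤ 0}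

/-- The optimal value `inf (P)`. -/
def primalVal (f : X → EReal) (ft : T → X → EReal) : EReal := ⨅ x ∈ feasSet ft, f x

/-- The optimal solution set `sol (P)`. -/
def solP (f : X → EReal) (ft : T → X → EReal) : Set X :=
  {x | x ∈ feasSet ft ∧ f x = primalVal f ft}

/-- The optimal value `sup (D_H)` of the `H`-dual problem. -/
def dualVal (f : X → EReal) (ft : T → X → EReal) (Hfam : Set (Finset T)) : EReal :=
  ⨆ H ∈ Hfam, ⨆ lam ∈ {l : T → ℝ | ∀ t ∈ H, 0 ≤ l t}, ⨅ x : X, lagFn f ft H lam x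

/-- The optimal value `sup (D)` of the classical Lagrangian-Haar dual, with
multipliers `λ ∈ ℝ_+^{(T)}` (finitely supported). -/
def dualHaar (f : X → EReal) (ft : T → X → EReal) : EReal :=
  ⨆ lam ∈ {l : T →₀ ℝ | ∀ t, 0 ≤ l t},
    ⨅ x : X, f x + ∑ t ∈ lam.support, ((lam t : ℝ) : EReal) * ft t x

/-- `sup (D_m)`: ordinary Lagrangian dual of the finite subproblem `(P_m)`. -/
def dualValFin (f : X → EReal) (ft : ℕ → X → EReal) (m : ℕ) : EReal :=
  ⨆ lam ∈ {l : ℕ → ℝ | ∀ k ∈ Finset.range m, 0 ≤ l k},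
    ⨅ x : X, f x + ∑ k ∈ Finset.range m, (lam k : EReal) * ft k x

/-- `inf (P_m)`: optimal value of the finite subproblem `(P_m)`. -/
def primalValFin (f : X → EReal) (ft : ℕ → X → EReal) (m : ℕ) : EReal :=
  ⨅ x ∈ {x : X | ∀ k ∈ Finset.range m, ft k x ≤ 0}, f x

/-- A family of finite subsets of `T` is covering if its union is all of `T`. -/
def CoveringFam (Hfam : Set (Finset T)) : Prop := (⋃ H ∈ Hfam, (H : Set T)) = Set.univ

/-- A family of finite subsets of `T` is directed (by inclusion). -/
def DirectedFam (Hfam : Set (Finset T)) : Prop :=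
  ∀ H ∈ Hfam, ∀ K ∈ Hfam, ∃ L ∈ Hfam, (H : Set T) ∪ (K : Set T) ⊆ (L : Set T)

/-- Legendre-Fenchel conjugate of `f : X → ℝ̄`, as a function on the dual `X*`
(with its weak* topology). -/
def conj (f : X → EReal) (p : WeakDual ℝ X) : EReal := ⨆ x : X, ((p x : EReal) - f x)

/-- Legendre-Fenchel conjugate of `g : X* → ℝ̄` w.r.t. the duality `⟨X*, X⟩`. -/
def conjDual (g : WeakDual ℝ X → EReal) (x : X) : EReal :=
  ⨆ p : WeakDual ℝ X, ((p x : EReal) - g p)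

/-- The function `φ_H := inf_{H ∈ 𝓗, λ ∈ ℝ_+^H} (f + ∑_{t ∈ H} λ_t f_t)^*`. -/
def phiVal (f : X → EReal) (ft : T → X → EReal) (Hfam : Set (Finset T))
    (p : WeakDual ℝ X) : EReal :=
  ⨅ H ∈ Hfam, ⨅ lam ∈ {l : T → ℝ | ∀ t ∈ H, 0 ≤ l t}, conj (lagFn f ft H lam) p

/-- Subdifferential at `a ∈ X*` of a function `g : X* → ℝ̄`, a subset of `X`
(empty when `g a ∉ ℝ`). -/
def dualSubdiff (g : WeakDual ℝ X → EReal) (a : WeakDual ℝ X) : Set X :=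
  {x | (g a ≠ ⊤ ∧ g a ≠ ⊥) ∧ ∀ q : WeakDual ℝ X, g a + (((q x - a x : ℝ)) : EReal) ≤ g q}

/-- Fenchel subdifferential of `g : X → ℝ̄` at `x̄ ∈ X`, a subset of `X*`. -/
def fenchelSubdiff (g : X → EReal) (xb : X) : Set (WeakDual ℝ X) :=
  {p | ∀ x, g xb + (((p x - p xb : ℝ)) : EReal) ≤ g x}

/-- The set `𝓐_H = ⋃_{H ∈ 𝓗, λ ∈ ℝ_+^H} epi (f + ∑_{t∈H} λ_t f_t)^* ⊆ X* × ℝ`. -/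
def AHset (f : X → EReal) (ft : T → X → EReal) (Hfam : Set (Finset T)) :
    Set (WeakDual ℝ X × ℝ) :=
  ⋃ H ∈ Hfam, ⋃ lam ∈ {l : T → ℝ | ∀ t ∈ H, 0 ≤ l t}, epiSet (conj (lagFn f ft H lam))

/-- `A` is closed convex regarding `B`: `cl (co A) ∩ B = A ∩ B`. -/
def ClosedConvexRegarding {Z : Type*} [AddCommGroup Z] [Module ℝ Z] [TopologicalSpace Z]
    (A B : Set Z) : Prop :=
  closure (convexHull ℝ A) ∩ B = A ∩ B

/-- Recession cone of a set. -/
def recCone {Z : Type*} [AddCommGroup Z] [SMul ℝ Z] (A : Set Z) : Set Z :=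
  {v | ∀ a ∈ A, ∀ r : ℝ, 0 ≤ r → a + r • v ∈ A}

/-- Recession function `h_∞`, defined through `epi h_∞ = (epi h)_∞`. -/
def recFn (h : X → EReal) (x : X) : EReal :=
  ⨅ r ∈ {r : ℝ | (x, r) ∈ recCone (epiSet h)}, (r : EReal)

/-- The recession cone `(P)_∞ = ∩_{t∈T} [(f_t)_∞ ≤ 0] ∩ [f_∞ ≤ 0]` of problem (P). -/
def PinfSet (f : X → EReal) (ft : T → X → EReal) : Set X :=
  {x | recFn f x ≤ 0 ∧ ∀ t, recFn (ft t) x ≤ 0}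

/-- A subset is a linear subspace. -/
def IsLinSubspace {Z : Type*} [AddCommGroup Z] [Module ℝ Z] (S : Set Z) : Prop :=
  ∃ V : Submodule ℝ Z, S = ↑V

/-- Negative polar cone `A^-` of a set `A ⊆ X*`. -/
def negPolar (A : Set (WeakDual ℝ X)) : Set X := {x | ∀ p ∈ A, p x ≤ 0}

/-- The convex cone generated by a set: `cone A = ℝ₊ (co A)`. -/
def coneGen {Z : Type*} [AddCommGroup Z] [Module ℝ Z] (A : Set Z) : Set Z :=
  {z | ∃ r : ℝ, 0 ≤ r ∧ ∃ a ∈ convexHull ℝ A, z = r • a}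

/-- A set is weakly compact: compact for the weak topology `σ(X, X*)`. -/
def WeaklyCompactSet (S : Set X) : Prop := IsCompact (toWeakSpace ℝ X '' S)

/-- A set is weakly locally compact: locally compact in the weak topology. -/
def WeaklyLocallyCompactSet (S : Set X) : Prop :=
  LocallyCompactSpace ↥(toWeakSpace ℝ X '' S)

/-- `h` is weakly inf-locally compact: every sublevel set `[h ≤ r]`, `r ∈ ℝ`,
is weakly locally compact. -/
def InfWeaklyLocallyCompact (h : X → EReal) : Prop :=
  ∀ r : ℝ, WeaklyLocallyCompactSet {x | h x ≤ (r : EReal)}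

/-- The Mackey topology `τ(X*, X)` on `X*`: the topology of uniform convergence on
convex balanced weakly compact subsets of `X`. -/
def mackeyTopology (X : Type*) [AddCommGroup X] [Module ℝ X] [TopologicalSpace X]
    [IsTopologicalAddGroup X] [ContinuousSMul ℝ X] [LocallyConvexSpace ℝ X] [T2Space X] :
    TopologicalSpace (WeakDual ℝ X) :=
  TopologicalSpace.induced
    (fun p => UniformOnFun.ofFun {K : Set X | Convex ℝ K ∧ Balanced ℝ K ∧ WeaklyCompactSet K}
      (fun x => p x))
    inferInstance

/-- Interior of `S` relative to `A` for the topology `τ`. -/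
def relIntIn {Z : Type*} (τ : TopologicalSpace Z) (A S : Set Z) : Set Z :=
  {z | z ∈ S ∧ ∃ U, τ.IsOpen U ∧ z ∈ U ∧ U ∩ A ⊆ S}

/-- `g : X* → ℝ̄` is `τ(X*,X)`-quasicontinuous: the affine hull of `dom g` is
Mackey-closed and of finite codimension, the Mackey relative interior of `dom g`
is non-empty, and the restriction of `g` to `aff (dom g)` is Mackey-continuous
on `ri (dom g)`. -/
def MackeyQuasicontinuous (g : WeakDual ℝ X → EReal) : Prop :=
  @IsClosed _ (mackeyTopology X)
    ((affineSpan ℝ {p : WeakDual ℝ X | g p ≠ ⊤}) : Set (WeakDual ℝ X)) ∧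
  FiniteDimensional ℝ (WeakDual ℝ X ⧸ (affineSpan ℝ {p : WeakDual ℝ X | g p ≠ ⊤}).direction) ∧
  (relIntIn (mackeyTopology X) ((affineSpan ℝ {p : WeakDual ℝ X | g p ≠ ⊤}) : Set (WeakDual ℝ X))
    {p : WeakDual ℝ X | g p ≠ ⊤}).Nonempty ∧
  ∀ p ∈ relIntIn (mackeyTopology X)
      ((affineSpan ℝ {p : WeakDual ℝ X | g p ≠ ⊤}) : Set (WeakDual ℝ X))
      {p : WeakDual ℝ X | g p ≠ ⊤},
    @ContinuousWithinAt _ _ (mackeyTopology X) _ g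
      ((affineSpan ℝ {p : WeakDual ℝ X | g p ≠ ⊤}) : Set (WeakDual ℝ X)) p

/-- The set `𝓚_H = ⋃_{H ∈ 𝓗} cone ({(a_t*, b_t) : t ∈ H} + {0} × ℝ₊)`. -/
def KHset (a : T → WeakDual ℝ X) (b : T → ℝ) (Hfam : Set (Finset T)) :
    Set (WeakDual ℝ X × ℝ) :=
  ⋃ H ∈ Hfam, coneGen ((fun t => (a t, b t)) '' (H : Set T) + ({0} ×ˢ Set.Ici (0 : ℝ)))

end Defs

section AuxLemmas

variable {T : Type*} {X : Type*} [AddCommGroup X] [Module ℝ X] [TopologicalSpace X]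
  [IsTopologicalAddGroup X] [ContinuousSMul ℝ X] [LocallyConvexSpace ℝ X] [T2Space X]

private lemma ereal_real {a : EReal} (h1 : a ≠ ⊤) (h2 : a ≠ ⊥) : ∃ v : ℝ, a = (v : EReal) := by
  lift a to ℝ using ⟨h1, h2⟩; exact ⟨a, rfl⟩

private lemma ereal_neg_iInf {ι : Sort*} (f : ι → EReal) : -⨅ i, f i = ⨆ i, -f i := by
  refine le_antisymm ?_ (iSup_le fun i => EReal.neg_le_neg_iff.mpr (iInf_le f i))
  rw [EReal.neg_le]
  refine le_iInf fun i => ?_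
  have h := EReal.neg_le_neg_iff.mpr (le_iSup (fun i => -f i) i)
  rwa [neg_neg] at h

private lemma ereal_neg_iSup {ι : Sort*} (f : ι → EReal) : -⨆ i, f i = ⨅ i, -f i := by
  have h := ereal_neg_iInf (fun i => -f i)
  simp only [neg_neg] at h
  rw [← h, neg_neg]

def toWD (p : X →L[ℝ] ℝ) : WeakDual ℝ X := p

private lemma sep_lemma {g : X → EReal} (hg : InGamma g) {x : X} {c : ℝ}
    (hc : ¬ g x ≤ (c : EReal)) :
    ∃ (p : X →L[ℝ] ℝ) (γ u : ℝ), 0 ≤ γ ∧ p x + γ * c < u ∧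
      ∀ z (r : ℝ), g z ≤ (r : EReal) → u < p z + γ * r := by
  obtain ⟨⟨hbot, ⟨z₀, hz₀⟩, hconv⟩, hlsc⟩ := hg
  have hcl : IsClosed (epiSet g) := by
    have h1 : IsClosed {p : X × EReal | g p.1 ≤ p.2} :=
      lowerSemicontinuous_iff_isClosed_epigraph.mp hlsc
    have h2 : epiSet g = (fun p : X × ℝ => ((p.1 : X), (p.2 : EReal))) ⁻¹'
        {p : X × EReal | g p.1 ≤ p.2} := rfl
    rw [h2]
    exact h1.preimage (continuous_fst.prodMk (continuous_coe_real_ereal.comp continuous_snd))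
  have hxc : (x, c) ∉ epiSet g := hc
  obtain ⟨F, u, hFx, hFb⟩ := geometric_hahn_banach_point_closed hconv hcl hxc
  set p : X →L[ℝ] ℝ := F.comp (ContinuousLinearMap.inl ℝ X ℝ) with hp
  set γ : ℝ := F (0, 1) with hγ
  have hF : ∀ (z : X) (r : ℝ), F (z, r) = p z + γ * r := by
    intro z r
    have h1 : (z, r) = ((z, (0 : ℝ)) : X × ℝ) + r • ((0 : X), (1 : ℝ)) := by
      simp [Prod.ext_iff]
    have hpz : p z = F (z, 0) := by simp [hp]
    rw [h1, map_add, map_smul, smul_eq_mul, hpz, ← hγ]; ring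
  obtain ⟨v, hv⟩ := ereal_real hz₀ (hbot z₀)
  have hmem : ∀ n : ℝ, v ≤ n → u < p z₀ + γ * n := by
    intro n hn
    have h1 : (z₀, n) ∈ epiSet g := by
      simp only [epiSet, Set.mem_setOf_eq, hv]
      exact_mod_cast hn
    have h2 := hFb _ h1
    rwa [hF] at h2
  have hγ0 : 0 ≤ γ := by
    by_contra hneg
    push_neg at hneg
    set m : ℝ := max 0 ((u - p z₀ - γ * v) / γ) with hm
    have h1 : u < p z₀ + γ * (v + m) := hmem (v + m) (by
      have := le_max_left 0 ((u - p z₀ - γ * v) / γ); linarith)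
    have h2 : (u - p z₀ - γ * v) / γ ≤ m := le_max_right _ _
    have h3 : γ * m ≤ γ * ((u - p z₀ - γ * v) / γ) :=
      mul_le_mul_of_nonpos_left h2 hneg.le
    have h4 : γ * ((u - p z₀ - γ * v) / γ) = u - p z₀ - γ * v := by
      field_simp
      exact mul_div_cancel_left₀ _ (ne_of_lt hneg)
    nlinarith
  refine ⟨p, γ, u, hγ0, ?_, ?_⟩
  · have h1 := hFx; rwa [hF] at h1
  · intro z r hzr
    have h1 := hFb (z, r) hzr
    rwa [hF] at h1

private lemma exists_minor {g : X → EReal} (hg : InGamma g) :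
    ∃ (q : X →L[ℝ] ℝ) (β : ℝ), ∀ z, ((q z + β : ℝ) : EReal) ≤ g z := by
  obtain ⟨z₀, hz₀⟩ := hg.1.2.1
  obtain ⟨v, hv⟩ := ereal_real hz₀ (hg.1.1 z₀)
  have hc : ¬ g z₀ ≤ ((v - 1 : ℝ) : EReal) := by
    rw [hv]; intro h; rw [EReal.coe_le_coe_iff] at h; linarith
  obtain ⟨p, γ, u, hγ0, hlt, hsep⟩ := sep_lemma hg hc
  have hγpos : 0 < γ := by
    rcases hγ0.lt_or_eq with h | h
    · exact h
    · exfalso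
      have h1 := hsep z₀ v (le_of_eq hv)
      rw [← h] at hlt h1
      simp only [zero_mul, add_zero] at hlt h1
      linarith
  refine ⟨-(γ⁻¹) • p, u / γ, fun z => ?_⟩
  by_cases hT : g z = ⊤
  · rw [hT]; exact le_top
  obtain ⟨w, hw⟩ := ereal_real hT (hg.1.1 z)
  have h1 := hsep z w (le_of_eq hw)
  rw [hw, EReal.coe_le_coe_iff]
  have happ : (-(γ⁻¹) • p) z = -(γ⁻¹) * p z := rfl
  rw [happ]
  have h3 : (u - p z) / γ < w := (div_lt_iff₀ hγpos).mpr (by nlinarith)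
  have h4 : -(γ⁻¹) * p z + u / γ = (u - p z) / γ := by field_simp; ring
  linarith

private lemma exists_minor_gt {g : X → EReal} (hg : InGamma g) {x : X} {c : ℝ}
    (hc : (c : EReal) < g x) :
    ∃ (q : X →L[ℝ] ℝ) (β : ℝ), (∀ z, ((q z + β : ℝ) : EReal) ≤ g z) ∧ c < q x + β := by
  obtain ⟨p, γ, u, hγ0, hlt, hsep⟩ := sep_lemma hg (not_le.mpr hc)
  rcases hγ0.lt_or_eq with hγpos | hγ0'
  · refine ⟨-(γ⁻¹) • p, u / γ, fun z => ?_, ?_⟩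
    · by_cases hT : g z = ⊤
      · rw [hT]; exact le_top
      obtain ⟨w, hw⟩ := ereal_real hT (hg.1.1 z)
      have h1 := hsep z w (le_of_eq hw)
      rw [hw, EReal.coe_le_coe_iff]
      have happ : (-(γ⁻¹) • p) z = -(γ⁻¹) * p z := rfl
      rw [happ]
      have h3 : (u - p z) / γ < w := (div_lt_iff₀ hγpos).mpr (by nlinarith)
      have h4 : -(γ⁻¹) * p z + u / γ = (u - p z) / γ := by field_simp; ring
      linarith
    · have happ : (-(γ⁻¹) • p) x = -(γ⁻¹) * p x := rfl
      rw [happ]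
      have h4 : -(γ⁻¹) * p x + u / γ = (u - p x) / γ := by field_simp; ring
      rw [h4, lt_div_iff₀ hγpos]; nlinarith
  · obtain ⟨q₀, β₀, hq₀⟩ := exists_minor hg
    have hε : 0 < u - p x := by
      rw [← hγ0'] at hlt
      simp only [zero_mul, add_zero] at hlt
      linarith
    set n : ℝ := max 0 ((c - (q₀ x + β₀)) / (u - p x) + 1) with hn
    have hn0 : 0 ≤ n := le_max_left _ _
    refine ⟨q₀ + n • (-p), β₀ + n * u, fun z => ?_, ?_⟩
    · by_cases hT : g z = ⊤
      · rw [hT]; exact le_top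
      obtain ⟨w, hw⟩ := ereal_real hT (hg.1.1 z)
      have h1 := hsep z w (le_of_eq hw)
      rw [← hγ0'] at h1
      simp only [zero_mul, add_zero] at h1
      have h3 : q₀ z + β₀ ≤ w := by
        have h2 := hq₀ z; rw [hw] at h2; exact_mod_cast h2
      rw [hw, EReal.coe_le_coe_iff]
      have happ : (q₀ + n • (-p)) z = q₀ z + n * (-(p z)) := rfl
      rw [happ]
      have h6 : n * (u - p z) ≤ 0 := mul_nonpos_of_nonneg_of_nonpos hn0 (by linarith)
      nlinarith
    · have happ : (q₀ + n • (-p)) x = q₀ x + n * (-(p x)) := rfl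
      rw [happ]
      have h4 : (c - (q₀ x + β₀)) / (u - p x) + 1 ≤ n := le_max_right _ _
      have h5 := mul_le_mul_of_nonneg_right h4 hε.le
      rw [add_mul, div_mul_cancel₀ _ (ne_of_gt hε), one_mul] at h5
      nlinarith


private lemma key_ineq {f : X → EReal} {ft : T → X → EReal} {Hfam : Set (Finset T)}
    {x : X} (hx : x ∈ dualSubdiff (phiVal f ft Hfam) 0) {r : ℝ}
    (hr : phiVal f ft Hfam 0 = (r : EReal)) {H : Finset T} (hH : H ∈ Hfam) {lam : T → ℝ}
    (hlam : lam ∈ {l : T → ℝ | ∀ t ∈ H, 0 ≤ l t}) {q : X →L[ℝ] ℝ} {β : ℝ}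
    (hmin : ∀ z, ((q z + β : ℝ) : EReal) ≤ lagFn f ft H lam z) :
    q x + β ≤ -r := by
  have h2 : phiVal f ft Hfam (toWD q) ≤ ((-β : ℝ) : EReal) := by
    simp only [phiVal]
    refine le_trans (iInf₂_le H hH) (le_trans (iInf₂_le lam hlam) ?_)
    simp only [conj]
    refine iSup_le fun z => ?_
    by_cases hT : lagFn f ft H lam z = ⊤
    · rw [hT]
      simp [sub_eq_add_neg]
    · have hB : lagFn f ft H lam z ≠ ⊥ := by
        intro hBz
        have h3 := hmin z
        rw [hBz, le_bot_iff] at h3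
        exact EReal.coe_ne_bot _ h3
      obtain ⟨w, hw⟩ := ereal_real hT hB
      have h3 : q z + β ≤ w := by
        have h4 := hmin z; rw [hw] at h4; exact_mod_cast h4
      rw [hw]
      have h5 : (toWD q) z = q z := rfl
      rw [h5, ← EReal.coe_sub, EReal.coe_le_coe_iff]
      linarith
  have h1 := hx.2 (toWD q)
  rw [hr] at h1
  have h6 := le_trans h1 h2
  rw [← EReal.coe_add, EReal.coe_le_coe_iff] at h6
  have h7 : r + (q x - 0) ≤ -β := h6
  linarith

private lemma subdiff_iff (g : WeakDual ℝ X → EReal) (a : WeakDual ℝ X) (x : X) :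
    x ∈ dualSubdiff g a ↔ g a + conjDual g x = ((a x : ℝ) : EReal) := by
  constructor
  · rintro ⟨⟨hT, hB⟩, hineq⟩
    obtain ⟨r, hr⟩ := ereal_real hT hB
    have hc : conjDual g x = ((a x - r : ℝ) : EReal) := by
      apply le_antisymm
      · refine iSup_le fun p => ?_
        have hp := hineq p
        rw [hr] at hp
        by_cases hpT : g p = ⊤
        · rw [hpT]; simp [sub_eq_add_neg]
        · have hpB : g p ≠ ⊥ := by
            intro hpB
            rw [hpB, ← EReal.coe_add, le_bot_iff] at hp
            exact EReal.coe_ne_bot _ hp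
          obtain ⟨s, hs⟩ := ereal_real hpT hpB
          rw [hs, ← EReal.coe_sub, EReal.coe_le_coe_iff]
          rw [hs, ← EReal.coe_add, EReal.coe_le_coe_iff] at hp
          linarith
      · have h := le_iSup (fun p : WeakDual ℝ X => ((p x : ℝ) : EReal) - g p) a
        rw [hr, ← EReal.coe_sub] at h
        exact h
    rw [hr, hc, ← EReal.coe_add, EReal.coe_eq_coe_iff]
    ring
  · intro h
    have hT : g a ≠ ⊤ := by
      intro hTa; rw [hTa] at h
      rcases eq_or_ne (conjDual g x) ⊥ with hb | hb
      · rw [hb, EReal.add_bot] at h; exact EReal.coe_ne_bot _ h.symm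
      · rw [EReal.top_add_of_ne_bot hb] at h; exact EReal.coe_ne_top _ h.symm
    have hB : g a ≠ ⊥ := by
      intro hBa; rw [hBa, EReal.bot_add] at h; exact EReal.coe_ne_bot _ h.symm
    obtain ⟨r, hr⟩ := ereal_real hT hB
    have hcT : conjDual g x ≠ ⊤ := by
      intro hc; rw [hr, hc, EReal.add_top_of_ne_bot (EReal.coe_ne_bot r)] at h
      exact EReal.coe_ne_top _ h.symm
    have hcB : conjDual g x ≠ ⊥ := by
      intro hc; rw [hc, EReal.add_bot] at h; exact EReal.coe_ne_bot _ h.symm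
    obtain ⟨s, hs⟩ := ereal_real hcT hcB
    have hrs : r + s = a x := by
      rw [hr, hs, ← EReal.coe_add] at h; exact_mod_cast h
    refine ⟨⟨hT, hB⟩, fun p => ?_⟩
    have hps : ((p x : ℝ) : EReal) - g p ≤ (s : EReal) := by
      rw [← hs]
      exact le_iSup (fun p : WeakDual ℝ X => ((p x : ℝ) : EReal) - g p) p
    by_cases hpT : g p = ⊤
    · rw [hpT]; exact le_top
    have hpB : g p ≠ ⊥ := by
      intro hpB
      rw [hpB, sub_eq_add_neg, EReal.neg_bot,
        EReal.add_top_of_ne_bot (EReal.coe_ne_bot _), top_le_iff] at hps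
      exact EReal.coe_ne_top _ hps
    obtain ⟨w, hw⟩ := ereal_real hpT hpB
    rw [hw, ← EReal.coe_sub, EReal.coe_le_coe_iff] at hps
    rw [hr, hw, ← EReal.coe_add, EReal.coe_le_coe_iff]
    linarith


end AuxLemmas



/-- for any `g : X* → ℝ̄`, `x ∈ ∂g(a*)` iff
`g(a*) + g*(x) = ⟨a*, x⟩`; in particular, for a covering family `𝓗` with
`{f; f_t} ⊆ Γ(X)` and `E ∩ dom f ≠ ∅`, any `x ∈ ∂φ_𝓗(0)` satisfies `x ∈ E` and
`f(x) = -φ_𝓗(0) = sup (D_𝓗) = inf (P)`. -/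
theorem subdiff_conj_and_reverse_duality {T : Type*} {X : Type*} [AddCommGroup X] [Module ℝ X] [TopologicalSpace X]
    [IsTopologicalAddGroup X] [ContinuousSMul ℝ X] [LocallyConvexSpace ℝ X] [T2Space X] :
    (∀ (g : WeakDual ℝ X → EReal) (a : WeakDual ℝ X) (x : X),
      x ∈ dualSubdiff g a ↔ g a + conjDual g x = ((a x : ℝ) : EReal)) ∧
    (∀ (f : X → EReal) (ft : T → X → EReal) (Hfam : Set (Finset T)),
      (∀ H ∈ Hfam, H.Nonempty) → CoveringFam Hfam →
      InGamma f → (∀ t, InGamma (ft t)) →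
      (∃ x ∈ feasSet ft, f x ≠ ⊤) →
      ∀ x ∈ dualSubdiff (phiVal f ft Hfam) (0 : WeakDual ℝ X),
        x ∈ feasSet ft ∧ f x = -phiVal f ft Hfam 0 ∧
        -phiVal f ft Hfam 0 = dualVal f ft Hfam ∧
        dualVal f ft Hfam = primalVal f ft) := by
  classical
  refine ⟨subdiff_iff, ?_⟩
  intro f ft Hfam _hne hcov hf hft _hfeas x hx
  obtain ⟨r, hr⟩ := ereal_real hx.1.1 hx.1.2
  -- Hfam is nonempty
  have hHne : Hfam.Nonempty := by
    by_contra h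
    rw [Set.not_nonempty_iff_eq_empty] at h
    rw [h] at hr
    have h2 : phiVal f ft (∅ : Set (Finset T)) (0 : WeakDual ℝ X) = ⊤ := by
      simp [phiVal]
    rw [h2] at hr
    exact EReal.coe_ne_top r hr.symm
  obtain ⟨H₀, hH₀⟩ := hHne
  have hlag0 : ∀ z, lagFn f ft H₀ (fun _ => (0 : ℝ)) z = f z := by
    intro z; simp [lagFn]
  -- Step 1 : x is feasible
  have hxE : x ∈ feasSet ft := by
    by_contra hxE
    obtain ⟨s, hs⟩ : ∃ s, ¬ ft s x ≤ 0 := by simpa [feasSet] using hxE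
    have hmem : s ∈ ⋃ H ∈ Hfam, (H : Set T) := by rw [hcov]; trivial
    obtain ⟨H, hH, hsH⟩ : ∃ H ∈ Hfam, s ∈ H := by simpa using hmem
    obtain ⟨q₀, β₀, hq₀⟩ := exists_minor hf
    have h0lt : ((0 : ℝ) : EReal) < ft s x := by
      rw [EReal.coe_zero]; exact not_le.mp hs
    obtain ⟨q₁, β₁, hq₁, hq₁x⟩ := exists_minor_gt (hft s) h0lt
    have hkey : ∀ n : ℝ, 0 ≤ n → (q₀ x + n * q₁ x) + (β₀ + n * β₁) ≤ -r := by
      intro n hn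
      have hlam : (fun t => if t = s then n else 0) ∈ {l : T → ℝ | ∀ t ∈ H, 0 ≤ l t} := by
        intro t _
        dsimp only
        split
        · exact hn
        · exact le_refl 0
      have hmin : ∀ z, (((q₀ + n • q₁) z + (β₀ + n * β₁) : ℝ) : EReal) ≤
          lagFn f ft H (fun t => if t = s then n else 0) z := by
        intro z
        have hsum : ∑ t ∈ H, (((if t = s then n else 0 : ℝ)) : EReal) * ft t z
            = (n : EReal) * ft s z := by
          rw [Finset.sum_eq_single_of_mem s hsH (fun t _ hts => by simp [hts])]
          simp
        have happ : (q₀ + n • q₁) z = q₀ z + n * q₁ z := rfl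
        have hC : (n : EReal) * ((q₁ z + β₁ : ℝ) : EReal) ≤ (n : EReal) * ft s z :=
          mul_le_mul_of_nonneg_left (hq₁ z) (by exact_mod_cast hn)
        simp only [lagFn]
        rw [hsum]
        calc (((q₀ + n • q₁) z + (β₀ + n * β₁) : ℝ) : EReal)
            = ((q₀ z + β₀ : ℝ) : EReal) + ((n * (q₁ z + β₁) : ℝ) : EReal) := by
              rw [← EReal.coe_add, EReal.coe_eq_coe_iff, happ]; ring
          _ ≤ f z + (n : EReal) * ft s z := by
              refine add_le_add (hq₀ z) ?_
              rw [EReal.coe_mul]; exact hC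
      exact key_ineq hx hr hH hlam hmin
    set δ : ℝ := q₁ x + β₁ with hδ
    have hδpos : 0 < δ := hq₁x
    set N : ℝ := max 0 ((-r - (q₀ x + β₀)) / δ + 1) with hN
    have h1 := hkey N (le_max_left _ _)
    have h2 : (-r - (q₀ x + β₀)) / δ + 1 ≤ N := le_max_right _ _
    have h3 := mul_le_mul_of_nonneg_right h2 hδpos.le
    rw [add_mul, div_mul_cancel₀ _ (ne_of_gt hδpos), one_mul] at h3
    have h4 : N * δ = N * q₁ x + N * β₁ := by rw [hδ]; ring
    linarith
  -- -phi(0) = dualVal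
  have hconj : ∀ (H : Finset T) (lam : T → ℝ),
      conj (lagFn f ft H lam) (0 : WeakDual ℝ X) = -(⨅ z, lagFn f ft H lam z) := by
    intro H lam
    rw [conj, ereal_neg_iInf]
    refine iSup_congr fun z => ?_
    show (((0 : ℝ)) : EReal) - lagFn f ft H lam z = -(lagFn f ft H lam z)
    simp
  have hdual : -phiVal f ft Hfam 0 = dualVal f ft Hfam := by
    simp only [phiVal, dualVal, hconj, ereal_neg_iInf, ereal_neg_iSup, neg_neg]
  -- weak duality
  have hweak : dualVal f ft Hfam ≤ primalVal f ft := by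
    rw [dualVal, primalVal]
    refine iSup₂_le fun H hH => iSup₂_le fun lam hlam => le_iInf₂ fun z hz => ?_
    refine le_trans (iInf_le _ z) ?_
    have hsum : ∑ t ∈ H, ((lam t : ℝ) : EReal) * ft t z ≤ 0 := by
      refine Finset.sum_nonpos fun t ht => ?_
      have h1 : (0 : EReal) ≤ ((lam t : ℝ) : EReal) := by exact_mod_cast hlam t ht
      have h2 := mul_le_mul_of_nonneg_left (hz t) h1
      rwa [mul_zero] at h2
    calc lagFn f ft H lam z = f z + ∑ t ∈ H, ((lam t : ℝ) : EReal) * ft t z := rfl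
      _ ≤ f z + 0 := add_le_add_right hsum _
      _ = f z := add_zero _
  have hpf : primalVal f ft ≤ f x := iInf₂_le x hxE
  -- f x ≤ -r
  have hfx_le : f x ≤ ((-r : ℝ) : EReal) := by
    by_contra hlt
    push_neg at hlt
    obtain ⟨q, β, hq, hqx⟩ := exists_minor_gt hf hlt
    have hlam : (fun _ : T => (0 : ℝ)) ∈ {l : T → ℝ | ∀ t ∈ H₀, 0 ≤ l t} :=
      fun t _ => le_refl 0
    have hmin : ∀ z, ((q z + β : ℝ) : EReal) ≤ lagFn f ft H₀ (fun _ => (0 : ℝ)) z := by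
      intro z; rw [hlag0 z]; exact hq z
    have h1 := key_ineq hx hr hH₀ hlam hmin
    linarith
  have hnr : -phiVal f ft Hfam 0 = ((-r : ℝ) : EReal) := by
    rw [hr]; exact (EReal.coe_neg r).symm
  have e1 : ((-r : ℝ) : EReal) = dualVal f ft Hfam := by rw [← hnr]; exact hdual
  have hfx_ge : ((-r : ℝ) : EReal) ≤ f x :=
    le_trans (le_of_eq e1) (le_trans hweak hpf)
  have hfx : f x = ((-r : ℝ) : EReal) := le_antisymm hfx_le hfx_ge
  refine ⟨hxE, ?_, ?_, ?_⟩
  · rw [hnr, hfx]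
  · rw [hnr]; exact e1
  · refine le_antisymm hweak ?_
    calc primalVal f ft ≤ f x := hpf
      _ = ((-r : ℝ) : EReal) := hfx
      _ = dualVal f ft Hfam := e1

end
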